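/- Let G be the complete 3-partite graph with parts V_1, V_2, V_3, not isomorphic to K_3 (i.e., not all three parts are singletons), such that at least two of the sizes |V_1|, |V_2|, |V_3| are equal. Then χ^ven(G) = 2. -/

import Mathlib

open Finset

open Classical in
/-- `σ^ven(v) = w(v) + Σ_{e ∋ v} w(e) + Σ_{u ∈ N(v)} w(u)` for a total weighting
given by a vertex weighting `wV` and a symmetric edge weighting `wE`. -/
noncomputable def sigmaVEN {V : Type*} (G : SimpleGraph V) [Fintype V]
    (wV : V → ℕ) (wE : V → V → ℕ) (v : V) : ℕ :=
  wV v + ∑ u : V, if G.Adj v u then wE v u + wV u else 0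

/-- `G` admits a neighbor full sum distinguishing total weighting with weights in `{1,…,k}`. -/
def HasNFSDTotalWeighting {V : Type*} (G : SimpleGraph V) [Fintype V] (k : ℕ) : Prop :=
  ∃ wV : V → ℕ, ∃ wE : V → V → ℕ, (∀ u v, wE u v = wE v u) ∧
    (∀ v, 1 ≤ wV v ∧ wV v ≤ k) ∧
    (∀ u v, G.Adj u v → 1 ≤ wE u v ∧ wE u v ≤ k) ∧
    ∀ u v, G.Adj u v → sigmaVEN G wV wE u ≠ sigmaVEN G wV wE v

/-- The common value of `σ^ven` on a part, for part-constant weightings. -/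
def F3 (m a : Fin 3 → ℕ) (c : Fin 3 → Fin 3 → ℕ) (i : Fin 3) : ℕ :=
  a i + ∑ j : Fin 3, if j ≠ i then m j * (c i j + a j) else 0

lemma sigma_part (m a : Fin 3 → ℕ) (c : Fin 3 → Fin 3 → ℕ)
    (v : Σ i, Fin (m i)) :
    sigmaVEN (SimpleGraph.completeMultipartiteGraph fun i => Fin (m i))
      (fun u => a u.1) (fun u w => c u.1 w.1) v = F3 m a c v.1 := by
  unfold sigmaVEN F3
  congr 1
  rw [← Finset.univ_sigma_univ, Finset.sum_sigma]
  refine Finset.sum_congr rfl fun j _ => ?_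
  rcases eq_or_ne j v.1 with h | h
  · subst h
    simp
  · simp only [SimpleGraph.comap_adj, SimpleGraph.top_adj, h, Ne.symm h,
      if_true, not_false_iff, ite_not]
    rw [Finset.sum_const, Finset.card_univ, Fintype.card_fin, smul_eq_mul]
    simp [Ne.symm h]

lemma hasNFSD_of (m a : Fin 3 → ℕ) (c : Fin 3 → Fin 3 → ℕ)
    (hsym : ∀ i j, c i j = c j i)
    (ha : ∀ i, 1 ≤ a i ∧ a i ≤ 2)
    (hc : ∀ i j, 1 ≤ c i j ∧ c i j ≤ 2)
    (hF : ∀ i j : Fin 3, i ≠ j → F3 m a c i ≠ F3 m a c j) :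
    HasNFSDTotalWeighting
      (SimpleGraph.completeMultipartiteGraph fun i => Fin (m i)) 2 := by
  refine ⟨fun u => a u.1, fun u w => c u.1 w.1, fun u w => hsym _ _,
    fun v => ha v.1, fun u w _ => hc u.1 w.1, fun u w huw => ?_⟩
  rw [sigma_part, sigma_part]
  exact hF u.1 w.1 huw


lemma F3_zero (m a : Fin 3 → ℕ) (c : Fin 3 → Fin 3 → ℕ) :
    F3 m a c 0 = a 0 + (m 1 * (c 0 1 + a 1) + m 2 * (c 0 2 + a 2)) := by
  simp [F3, Fin.sum_univ_three]

lemma F3_one (m a : Fin 3 → ℕ) (c : Fin 3 → Fin 3 → ℕ) :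
    F3 m a c 1 = a 1 + (m 0 * (c 1 0 + a 0) + m 2 * (c 1 2 + a 2)) := by
  simp [F3, Fin.sum_univ_three]

lemma F3_two (m a : Fin 3 → ℕ) (c : Fin 3 → Fin 3 → ℕ) :
    F3 m a c 2 = a 2 + (m 0 * (c 2 0 + a 0) + m 1 * (c 2 1 + a 1)) := by
  simp [F3, Fin.sum_univ_three]

lemma F3_ne_all (m a : Fin 3 → ℕ) (c : Fin 3 → Fin 3 → ℕ)
    (h01 : F3 m a c 0 ≠ F3 m a c 1) (h02 : F3 m a c 0 ≠ F3 m a c 2)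
    (h12 : F3 m a c 1 ≠ F3 m a c 2) :
    ∀ i j : Fin 3, i ≠ j → F3 m a c i ≠ F3 m a c j := by
  intro i j hij
  fin_cases i <;> fin_cases j <;>
    first
      | exact absurd rfl hij
      | exact h01
      | exact h02
      | exact h12
      | exact h01.symm
      | exact h02.symm
      | exact h12.symm

lemma F3_const (m : Fin 3 → ℕ) (i : Fin 3) :
    F3 m (fun _ => 1) (fun _ _ => 1) i + 2 * m i = 1 + 2 * (m 0 + m 1 + m 2) := by
  fin_cases i <;> simp [F3, Fin.sum_univ_three] <;> omega

/-- For the complete 3-partite graph, not isomorphic to `K_3`, in which at least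
two of the three part sizes are equal, `χ^ven(G) = 2`. -/
theorem chiVEN_complete3partite_eq_two (m : Fin 3 → ℕ) (hm : ∀ i, 1 ≤ m i)
    (hK3 : ¬ ∀ i, m i = 1) (heq : ∃ i j, i ≠ j ∧ m i = m j) :
    IsLeast {k : ℕ | 0 < k ∧
      HasNFSDTotalWeighting
        (SimpleGraph.completeMultipartiteGraph fun i => Fin (m i)) k} 2 := by
  have h0 := hm 0
  have h1 := hm 1
  have h2 := hm 2
  have hK : ¬(m 0 = 1 ∧ m 1 = 1 ∧ m 2 = 1) := by
    rintro ⟨ha, hb, hc⟩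
    exact hK3 (fun i => by fin_cases i <;> assumption)
  obtain ⟨i0, j0, hij0, hmij0⟩ := heq
  constructor
  · refine ⟨by norm_num, ?_⟩
    have hpair : m 0 = m 1 ∨ m 0 = m 2 ∨ m 1 = m 2 := by
      fin_cases i0 <;> fin_cases j0 <;> simp_all
    clear hij0 hmij0
    rcases hpair with hp | hp | hp
    · by_cases hM : m 0 = 1
      · refine hasNFSD_of m ![1,1,1] ![![1,1,2],![1,1,1],![2,1,1]] (by decide) (by decide) (by decide)
            (F3_ne_all m _ _ ?_ ?_ ?_) <;>
          simp [F3_zero, F3_one, F3_two, Matrix.cons_val_zero, Matrix.cons_val_one,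
            Matrix.cons_val_two, Matrix.head_cons, Matrix.tail_cons, Matrix.vecHead, Matrix.vecTail] <;>
          omega
      · by_cases hT : m 0 = 2 * m 2
        · refine hasNFSD_of m ![1,2,1] ![![1,1,2],![1,1,1],![2,1,1]] (by decide) (by decide) (by decide)
            (F3_ne_all m _ _ ?_ ?_ ?_) <;>
          simp [F3_zero, F3_one, F3_two, Matrix.cons_val_zero, Matrix.cons_val_one,
            Matrix.cons_val_two, Matrix.head_cons, Matrix.tail_cons, Matrix.vecHead, Matrix.vecTail] <;>
          omega
        · refine hasNFSD_of m ![1,2,1] ![![1,2,1],![2,1,1],![1,1,1]] (by decide) (by decide) (by decide)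
            (F3_ne_all m _ _ ?_ ?_ ?_) <;>
          simp [F3_zero, F3_one, F3_two, Matrix.cons_val_zero, Matrix.cons_val_one,
            Matrix.cons_val_two, Matrix.head_cons, Matrix.tail_cons, Matrix.vecHead, Matrix.vecTail] <;>
          omega
    · by_cases hM : m 0 = 1
      · refine hasNFSD_of m ![1,1,1] ![![1,2,1],![2,1,1],![1,1,1]] (by decide) (by decide) (by decide)
            (F3_ne_all m _ _ ?_ ?_ ?_) <;>
          simp [F3_zero, F3_one, F3_two, Matrix.cons_val_zero, Matrix.cons_val_one,
            Matrix.cons_val_two, Matrix.head_cons, Matrix.tail_cons, Matrix.vecHead, Matrix.vecTail] <;>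
          omega
      · by_cases hT : m 0 = 2 * m 1
        · refine hasNFSD_of m ![1,1,2] ![![1,2,1],![2,1,1],![1,1,1]] (by decide) (by decide) (by decide)
            (F3_ne_all m _ _ ?_ ?_ ?_) <;>
          simp [F3_zero, F3_one, F3_two, Matrix.cons_val_zero, Matrix.cons_val_one,
            Matrix.cons_val_two, Matrix.head_cons, Matrix.tail_cons, Matrix.vecHead, Matrix.vecTail] <;>
          omega
        · refine hasNFSD_of m ![1,1,2] ![![1,1,2],![1,1,1],![2,1,1]] (by decide) (by decide) (by decide)
            (F3_ne_all m _ _ ?_ ?_ ?_) <;>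
          simp [F3_zero, F3_one, F3_two, Matrix.cons_val_zero, Matrix.cons_val_one,
            Matrix.cons_val_two, Matrix.head_cons, Matrix.tail_cons, Matrix.vecHead, Matrix.vecTail] <;>
          omega
    · by_cases hM : m 1 = 1
      · refine hasNFSD_of m ![1,1,1] ![![1,2,1],![2,1,1],![1,1,1]] (by decide) (by decide) (by decide)
            (F3_ne_all m _ _ ?_ ?_ ?_) <;>
          simp [F3_zero, F3_one, F3_two, Matrix.cons_val_zero, Matrix.cons_val_one,
            Matrix.cons_val_two, Matrix.head_cons, Matrix.tail_cons, Matrix.vecHead, Matrix.vecTail] <;>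
          omega
      · by_cases hT : m 1 = 2 * m 0
        · refine hasNFSD_of m ![1,1,2] ![![1,2,1],![2,1,1],![1,1,1]] (by decide) (by decide) (by decide)
            (F3_ne_all m _ _ ?_ ?_ ?_) <;>
          simp [F3_zero, F3_one, F3_two, Matrix.cons_val_zero, Matrix.cons_val_one,
            Matrix.cons_val_two, Matrix.head_cons, Matrix.tail_cons, Matrix.vecHead, Matrix.vecTail] <;>
          omega
        · refine hasNFSD_of m ![1,1,2] ![![1,1,1],![1,1,2],![1,2,1]] (by decide) (by decide) (by decide)
            (F3_ne_all m _ _ ?_ ?_ ?_) <;>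
          simp [F3_zero, F3_one, F3_two, Matrix.cons_val_zero, Matrix.cons_val_one,
            Matrix.cons_val_two, Matrix.head_cons, Matrix.tail_cons, Matrix.vecHead, Matrix.vecTail] <;>
          omega
  · intro k hk
    obtain ⟨hkpos, wV, wE, hsym, hE1, hE2, hdist⟩ := hk
    by_contra hlt
    have hk1 : k = 1 := by omega
    subst hk1
    have hadj : (SimpleGraph.completeMultipartiteGraph fun i => Fin (m i)).Adj
        ⟨i0, ⟨0, hm i0⟩⟩ ⟨j0, ⟨0, hm j0⟩⟩ := hij0
    have key : ∀ v, sigmaVEN (SimpleGraph.completeMultipartiteGraph fun i => Fin (m i)) wV wE v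
        = F3 m (fun _ => 1) (fun _ _ => 1) v.1 := by
      intro v
      rw [← sigma_part m (fun _ => 1) (fun _ _ => 1) v]
      unfold sigmaVEN
      have hwv : wV v = 1 := le_antisymm (hE1 v).2 (hE1 v).1
      rw [hwv]
      congr 1
      refine Finset.sum_congr rfl fun u _ => ?_
      rcases Classical.em
        ((SimpleGraph.completeMultipartiteGraph fun i => Fin (m i)).Adj v u) with h | h
      · rw [if_pos h, if_pos h]
        have he := hE2 v u h
        have hu := hE1 u
        show wE v u + wV u = 1 + 1
        omega
      · rw [if_neg h, if_neg h]
    refine hdist _ _ hadj ?_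
    rw [key, key]
    show F3 m (fun _ => 1) (fun _ _ => 1) i0 = F3 m (fun _ => 1) (fun _ _ => 1) j0
    have e1 := F3_const m i0
    have e2 := F3_const m j0
    omega
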